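/- Fix n ≥ 2. Let a, b, c, d and a′, b′, c′, d′ be complex numbers with ad − bc = 1 and a′d′ − b′c′ = 1. Then the three equalities bc = b′c′, a^{n+1} b^{n−1} = a′^{n+1} b′^{n−1} and c^{n−1} d^{n+1} = c′^{n−1} d′^{n+1} hold if and only if there exist t ∈ ℂ with t ≠ 0 and ε ∈ {1, −1} such that a′ = ε t^{n−1} a, b′ t^{n+1} = ε b, c′ = ε t^{n+1} c and d′ t^{n−1} = ε d. (Theorem 1.2, injectivity: the transformation (a,b,c,d) ↦ ±(t^{n−1}a, t^{−(n+1)}b, t^{n+1}c, t^{−(n−1)}d) is the effect of conjugating f by the Möbius map z ↦ z/t², so X, Y₁, Y₂ form a complete set of conjugacy invariants for bicritical maps with marked critical points.) -/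

import Mathlib

/-- Existence of k-th roots in ℂ. -/
lemma exists_kth_root (k : ℕ) (hk : 0 < k) (r : ℂ) (hr : r ≠ 0) :
    ∃ t : ℂ, t ≠ 0 ∧ t ^ k = r := by
  obtain ⟨t, ht⟩ := IsAlgClosed.exists_pow_nat_eq r hk
  refine ⟨t, ?_, ht⟩
  intro h0
  rw [h0, zero_pow hk.ne'] at ht
  exact hr ht.symm

/-- Core root lemma: if `u^{n+1} = v^{n-1}` then there is a common `t` with
`t^{n-1} = ε u`, `t^{n+1} = ε v` for some sign `ε`. -/
lemma root_lemma (n : ℕ) (hn : 2 ≤ n) (u v : ℂ) (hu : u ≠ 0) (hv : v ≠ 0)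
    (huv : u ^ (n + 1) = v ^ (n - 1)) :
    ∃ t : ℂ, t ≠ 0 ∧ ∃ ε : ℂ, (ε = 1 ∨ ε = -1) ∧
      t ^ (n - 1) = ε * u ∧ t ^ (n + 1) = ε * v := by
  obtain ⟨s, hs⟩ := IsAlgClosed.exists_pow_nat_eq (v / u) (show 0 < 2 by norm_num)
  have hs0 : s ≠ 0 := by
    intro h0
    rw [h0, zero_pow (by norm_num)] at hs
    rcases div_eq_zero_iff.mp hs.symm with h1 | h1
    · exact hv h1
    · exact hu h1
  have hsum : n + 1 = (n - 1) + 2 := by omega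
  have hpow : s ^ (n + 1) = s ^ (n - 1) * s ^ 2 := by rw [hsum, pow_add]
  have hsq : (s ^ (n - 1)) ^ 2 = u ^ 2 := by
    rw [← pow_mul, mul_comm, pow_mul, hs, div_pow]
    rw [← huv, hsum, pow_add]
    field_simp
  have hfac : (s ^ (n - 1) - u) * (s ^ (n - 1) + u) = 0 := by linear_combination hsq
  rcases mul_eq_zero.mp hfac with hcase | hcase
  · -- s^{n-1} = u
    have h1 : s ^ (n - 1) = u := sub_eq_zero.mp hcase
    refine ⟨s, hs0, 1, Or.inl rfl, by rw [h1, one_mul], ?_⟩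
    rw [hpow, h1, hs, one_mul]
    field_simp
  · -- s^{n-1} = -u
    have h1 : s ^ (n - 1) = -u := by linear_combination hcase
    rcases Nat.even_or_odd n with he | ho
    · -- n even, so n-1 odd: use t = -s, ε = 1
      have hodd : Odd (n - 1) := by
        obtain ⟨k, hk⟩ := he
        exact ⟨k - 1, by omega⟩
      refine ⟨-s, neg_ne_zero.mpr hs0, 1, Or.inl rfl, ?_, ?_⟩
      · rw [hodd.neg_pow, h1, one_mul, neg_neg]
      · have : (-s) ^ (n + 1) = (-s) ^ (n - 1) * (-s) ^ 2 := by rw [hsum, pow_add]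
        rw [this, hodd.neg_pow, h1, neg_neg, neg_pow_two, hs, one_mul]
        field_simp
    · -- n odd: use t = s, ε = -1
      refine ⟨s, hs0, -1, Or.inr rfl, by rw [h1]; ring, ?_⟩
      rw [hpow, h1, hs]
      field_simp

theorem stmt1 (n : ℕ) (hn : 2 ≤ n) (a b c d a' b' c' d' : ℂ)
    (h : a * d - b * c = 1) (h' : a' * d' - b' * c' = 1) :
    (b * c = b' * c' ∧
      a ^ (n + 1) * b ^ (n - 1) = a' ^ (n + 1) * b' ^ (n - 1) ∧
      c ^ (n - 1) * d ^ (n + 1) = c' ^ (n - 1) * d' ^ (n + 1)) ↔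
    (∃ t : ℂ, t ≠ 0 ∧ ∃ ε : ℂ, (ε = 1 ∨ ε = -1) ∧
      a' = ε * t ^ (n - 1) * a ∧ b' * t ^ (n + 1) = ε * b ∧
      c' = ε * t ^ (n + 1) * c ∧ d' * t ^ (n - 1) = ε * d) := by
  have hn1 : 0 < n - 1 := by omega
  have hn2 : 0 < n + 1 := by omega
  constructor
  · rintro ⟨hX, hY1, hY2⟩
    have had : a * d = a' * d' := by linear_combination h - h' + hX
    by_cases ha : a = 0
    · -- a = 0 : bc = -1
      have hbc : b * c = -1 := by linear_combination -h + ha * d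
      have hb : b ≠ 0 := fun h0 => by simp [h0] at hbc
      have hc : c ≠ 0 := fun h0 => by simp [h0] at hbc
      have hb'c' : b' * c' = -1 := hX ▸ hbc
      have hb' : b' ≠ 0 := fun h0 => by simp [h0] at hb'c'
      have hc' : c' ≠ 0 := fun h0 => by simp [h0] at hb'c'
      have ha' : a' = 0 := by
        have : a' ^ (n + 1) * b' ^ (n - 1) = 0 := by
          rw [← hY1, ha, zero_pow hn2.ne', zero_mul]
        rcases mul_eq_zero.mp this with h0 | h0
        · exact pow_eq_zero_iff hn2.ne' |>.mp h0
        · exact absurd (pow_eq_zero_iff hn1.ne' |>.mp h0) hb'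
      by_cases hd : d = 0
      · -- d = 0, hence d' = 0
        have hd' : d' = 0 := by
          have : c' ^ (n - 1) * d' ^ (n + 1) = 0 := by
            rw [← hY2, hd, zero_pow hn2.ne', mul_zero]
          rcases mul_eq_zero.mp this with h0 | h0
          · exact absurd (pow_eq_zero_iff hn1.ne' |>.mp h0) hc'
          · exact pow_eq_zero_iff hn2.ne' |>.mp h0
        obtain ⟨t, ht0, ht⟩ := exists_kth_root (n + 1) hn2 (b / b') (div_ne_zero hb hb')
        refine ⟨t, ht0, 1, Or.inl rfl, by rw [ha, ha']; ring, ?_, ?_, by rw [hd, hd']; ring⟩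
        · rw [ht]; field_simp
        · rw [ht]; field_simp; linear_combination -hX
      · -- d ≠ 0
        have hd' : d' ≠ 0 := by
          intro h0
          have : c ^ (n - 1) * d ^ (n + 1) = 0 := by
            rw [hY2, h0, zero_pow hn2.ne', mul_zero]
          rcases mul_eq_zero.mp this with h0' | h0'
          · exact hc (pow_eq_zero_iff hn1.ne' |>.mp h0')
          · exact hd (pow_eq_zero_iff hn2.ne' |>.mp h0')
        have key : (d / d') ^ (n + 1) = (b / b') ^ (n - 1) := by
          rw [div_pow, div_pow, div_eq_div_iff (pow_ne_zero _ hd') (pow_ne_zero _ hb')]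
          have hcb : (c' * b') ^ (n - 1) = (c * b) ^ (n - 1) := by
            rw [mul_comm c' b', mul_comm c b, ← hX]
          have := mul_left_cancel₀ (pow_ne_zero (n - 1) hc)
            (show c ^ (n-1) * (d ^ (n+1) * b' ^ (n-1)) = c ^ (n-1) * (b ^ (n-1) * d' ^ (n+1)) by
              have h2 : c ^ (n-1) * d ^ (n+1) * b' ^ (n-1) = c' ^ (n-1) * d' ^ (n+1) * b' ^ (n-1) := by
                rw [hY2]
              calc c ^ (n-1) * (d ^ (n+1) * b' ^ (n-1))
                  = c ^ (n-1) * d ^ (n+1) * b' ^ (n-1) := by ring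
                _ = c' ^ (n-1) * b' ^ (n-1) * d' ^ (n+1) := by rw [hY2]; ring
                _ = (c' * b') ^ (n-1) * d' ^ (n+1) := by rw [mul_pow]
                _ = (c * b) ^ (n-1) * d' ^ (n+1) := by rw [hcb]
                _ = c ^ (n-1) * (b ^ (n-1) * d' ^ (n+1)) := by rw [mul_pow]; ring)
          exact this
        obtain ⟨t, ht0, ε, hε, ht1, ht2⟩ := root_lemma n hn (d / d') (b / b')
          (div_ne_zero hd hd') (div_ne_zero hb hb') key
        have hε2 : ε * ε = 1 := by rcases hε with rfl | rfl <;> norm_num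
        refine ⟨t, ht0, ε, hε, by rw [ha, ha']; ring, ?_, ?_, ?_⟩
        · rw [ht2]; field_simp
        · rw [ht2]
          field_simp
          linear_combination c * b * hε2 - ε * ε * hX - (c' * b' + c * b) * hε2
        · rw [ht1]; field_simp
    · -- a ≠ 0
      by_cases hb : b = 0
      · -- b = 0 : ad = 1
        have hd : d ≠ 0 := by
          intro h0; rw [hb, h0] at h; simp at h
        have had1 : a' * d' = a * d := had.symm
        have ha' : a' ≠ 0 := by
          intro h0; rw [h0, zero_mul] at had1
          exact ha (by rcases mul_eq_zero.mp had1.symm with h1 | h1; exact h1; exact absurd h1 hd)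
        have hd' : d' ≠ 0 := by
          intro h0; rw [h0, mul_zero] at had1
          exact ha (by rcases mul_eq_zero.mp had1.symm with h1 | h1; exact h1; exact absurd h1 hd)
        have hb' : b' = 0 := by
          have : a' ^ (n + 1) * b' ^ (n - 1) = 0 := by
            rw [← hY1, hb, zero_pow hn1.ne', mul_zero]
          rcases mul_eq_zero.mp this with h0 | h0
          · exact absurd (pow_eq_zero_iff hn2.ne' |>.mp h0) ha'
          · exact pow_eq_zero_iff hn1.ne' |>.mp h0
        by_cases hc : c = 0
        · have hc' : c' = 0 := by
            have : c' ^ (n - 1) * d' ^ (n + 1) = 0 := by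
              rw [← hY2, hc, zero_pow hn1.ne', zero_mul]
            rcases mul_eq_zero.mp this with h0 | h0
            · exact pow_eq_zero_iff hn1.ne' |>.mp h0
            · exact absurd (pow_eq_zero_iff hn2.ne' |>.mp h0) hd'
          obtain ⟨t, ht0, ht⟩ := exists_kth_root (n - 1) hn1 (a' / a) (div_ne_zero ha' ha)
          refine ⟨t, ht0, 1, Or.inl rfl, ?_, by rw [hb, hb']; ring,
            by rw [hc, hc']; ring, ?_⟩
          · rw [ht]; field_simp
          · rw [ht]; field_simp; linear_combination -had
        · -- c ≠ 0
          have hc' : c' ≠ 0 := by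
            intro h0
            have : c ^ (n - 1) * d ^ (n + 1) = 0 := by
              rw [hY2, h0, zero_pow hn1.ne', zero_mul]
            rcases mul_eq_zero.mp this with h0' | h0'
            · exact hc (pow_eq_zero_iff hn1.ne' |>.mp h0')
            · exact hd (pow_eq_zero_iff hn2.ne' |>.mp h0')
          have key : (a' / a) ^ (n + 1) = (c' / c) ^ (n - 1) := by
            rw [div_pow, div_pow, div_eq_div_iff (pow_ne_zero _ ha) (pow_ne_zero _ hc)]
            have hda : (d' * a') ^ (n + 1) = (d * a) ^ (n + 1) := by
              rw [mul_comm d' a', mul_comm d a, had1]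
            have := mul_left_cancel₀ (pow_ne_zero (n + 1) hd)
              (show d ^ (n+1) * (a' ^ (n+1) * c ^ (n-1)) = d ^ (n+1) * (c' ^ (n-1) * a ^ (n+1)) by
                calc d ^ (n+1) * (a' ^ (n+1) * c ^ (n-1))
                    = c ^ (n-1) * d ^ (n+1) * a' ^ (n+1) := by ring
                  _ = c' ^ (n-1) * (d' * a') ^ (n+1) := by rw [hY2, mul_pow]; ring
                  _ = c' ^ (n-1) * (d * a) ^ (n+1) := by rw [hda]
                  _ = d ^ (n+1) * (c' ^ (n-1) * a ^ (n+1)) := by rw [mul_pow]; ring)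
            exact this
          obtain ⟨t, ht0, ε, hε, ht1, ht2⟩ := root_lemma n hn (a' / a) (c' / c)
            (div_ne_zero ha' ha) (div_ne_zero hc' hc) key
          have hε2 : ε * ε = 1 := by rcases hε with rfl | rfl <;> norm_num
          refine ⟨t, ht0, ε, hε, ?_, by rw [hb, hb']; ring, ?_, ?_⟩
          · rw [ht1]; field_simp; linear_combination -hε2
          · rw [ht2]; field_simp; linear_combination -hε2
          · rw [ht1]; field_simp; linear_combination (-ε) * had
      · -- a ≠ 0, b ≠ 0
        have ha' : a' ≠ 0 := by
          intro h0
          have : a ^ (n + 1) * b ^ (n - 1) = 0 := by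
            rw [hY1, h0, zero_pow hn2.ne', zero_mul]
          rcases mul_eq_zero.mp this with h0' | h0'
          · exact ha (pow_eq_zero_iff hn2.ne' |>.mp h0')
          · exact hb (pow_eq_zero_iff hn1.ne' |>.mp h0')
        have hb' : b' ≠ 0 := by
          intro h0
          have : a ^ (n + 1) * b ^ (n - 1) = 0 := by
            rw [hY1, h0, zero_pow hn1.ne', mul_zero]
          rcases mul_eq_zero.mp this with h0' | h0'
          · exact ha (pow_eq_zero_iff hn2.ne' |>.mp h0')
          · exact hb (pow_eq_zero_iff hn1.ne' |>.mp h0')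
        have key : (a' / a) ^ (n + 1) = (b / b') ^ (n - 1) := by
          rw [div_pow, div_pow, div_eq_div_iff (pow_ne_zero _ ha) (pow_ne_zero _ hb')]
          linear_combination -hY1
        obtain ⟨t, ht0, ε, hε, ht1, ht2⟩ := root_lemma n hn (a' / a) (b / b')
          (div_ne_zero ha' ha) (div_ne_zero hb hb') key
        have hε2 : ε * ε = 1 := by rcases hε with rfl | rfl <;> norm_num
        refine ⟨t, ht0, ε, hε, ?_, ?_, ?_, ?_⟩
        · rw [ht1]; field_simp; linear_combination -hε2
        · rw [ht2]; field_simp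
        · rw [ht2]
          field_simp
          linear_combination c * b * hε2 - ε * ε * hX - (c' * b' + c * b) * hε2
        · rw [ht1]; field_simp; linear_combination (-ε) * had
  · rintro ⟨t, ht0, ε, hε, h1, h2, h3, h4⟩
    have hε2 : ε ^ 2 = 1 := by rcases hε with rfl | rfl <;> norm_num
    have htn1 : t ^ (n + 1) ≠ 0 := pow_ne_zero _ ht0
    have htm : t ^ (n - 1) ≠ 0 := pow_ne_zero _ ht0
    have hb' : b' = ε * b / t ^ (n + 1) := by
      field_simp; linear_combination h2
    have hd' : d' = ε * d / t ^ (n - 1) := by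
      field_simp; linear_combination h4
    have hεpq : ∀ p q : ℕ, p + q = 2 * n → ε ^ p * ε ^ q = 1 := by
      intro p q hpq
      rw [← pow_add, hpq, pow_mul, hε2, one_pow]
    have hεn : ε ^ (n + 1) * ε ^ (n - 1) = 1 := hεpq _ _ (by omega)
    refine ⟨?_, ?_, ?_⟩
    · rw [hb', h3]
      field_simp
      linear_combination (-(b * c)) * hε2
    · rw [h1, hb']
      field_simp
      have ht : (t ^ (n - 1)) ^ (n + 1) = (t ^ (n + 1)) ^ (n - 1) := by rw [← pow_mul, ← pow_mul, mul_comm]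
      rw [mul_pow, mul_pow, div_pow, mul_pow, ht]
      field_simp
      linear_combination (-(a ^ (n + 1) * b ^ (n - 1))) * hεn
    · rw [h3, hd']
      field_simp
      have ht : (t ^ (n + 1)) ^ (n - 1) = (t ^ (n - 1)) ^ (n + 1) := by rw [← pow_mul, ← pow_mul, mul_comm]
      rw [mul_pow, mul_pow, div_pow, mul_pow, ht]
      field_simp
      linear_combination (-(c ^ (n - 1) * d ^ (n + 1))) * (hεpq (n - 1) (n + 1) (by omega))
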